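/- Let φ : A → A{τ} be a Drinfeld module of rank r over A, m ∈ A∖{0}, and ψ = m^{−1}φm. Then ord_{z=1} L_P(ψ̃/Ã) = ord_{z=1} L_P(φ̃/Ã), where ord_{z=1} denotes the largest n such that (z−1)^n divides the P-adic L-series in T_z(K_P). -/

import Mathlib

/-- (Invariance of the vanishing order at `z = 1` under isogeny.)
Let `φ` be a Drinfeld module over `A = F_q[θ]`, `m ∈ A∖{0}` and `ψ = m⁻¹φm`.  The
`P`-adic L-series `L_P(φ̃/Ã), L_P(ψ̃/Ã) ∈ T_z(K_P)` satisfy the ratio relation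
`g_{P,φ}(z)·L_P(ψ̃/Ã) = g_{P,ψ}(z)·L_P(φ̃/Ã)·∏_{Q∣m} g_{Q,φ}(z)/Q`, where the
polynomials `g_{P,φ}(z), g_{P,ψ}(z), ∏_{Q∣m} g_{Q,φ}(z) ∈ A[z]` do not vanish at
`z = 1`.  Then `ord_{z=1} L_P(ψ̃/Ã) = ord_{z=1} L_P(φ̃/Ã)`: for every `n`, `(z−1)^n`
divides `L_P(ψ̃/Ã)` in `T_z(K_P)` iff it divides `L_P(φ̃/Ã)` in `T_z(K_P)`. -/
theorem stmt_19 {Fq K_P : Type*} [Field Fq] [Fintype Fq] [Field K_P]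
    (v : K_P → WithTop ℤ) (hv0 : ∀ x : K_P, v x = ⊤ ↔ x = 0)
    (hvadd : ∀ x y : K_P, min (v x) (v y) ≤ v (x + y))
    (hvmul : ∀ x y : K_P, v (x * y) = v x + v y)
    (ι : Polynomial Fq →+* K_P) (hinj : Function.Injective ι)
    (hιv : ∀ p : Polynomial Fq, p ≠ 0 → (0 : WithTop ℤ) ≤ v (ι p))
    (Tate : PowerSeries K_P → Prop)
    (hTate : ∀ f, Tate f ↔
      ∀ N : ℤ, ∃ M, ∀ m ≥ M, (N : WithTop ℤ) ≤ v (PowerSeries.coeff m f))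
    (LPphi LPpsi : PowerSeries K_P) (hT1 : Tate LPphi) (hT2 : Tate LPpsi)
    -- `g_{P,φ}(z)`, `g_{P,ψ}(z)` and `∏_{Q ∣ m} g_{Q,φ}(z)`, all in `A[z]`,
    -- nonvanishing at `z = 1`
    (gphiP gpsiP prodG : Polynomial (Polynomial Fq))
    (h1 : Polynomial.eval (1 : Polynomial Fq) gphiP ≠ 0)
    (h2 : Polynomial.eval (1 : Polynomial Fq) gpsiP ≠ 0)
    (h3 : Polynomial.eval (1 : Polynomial Fq) prodG ≠ 0)
    -- `cK = (∏_{Q ∣ m} Q)⁻¹ ∈ K_P`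
    (cK : K_P) (hcK : cK ≠ 0)
    (hrel : ((Polynomial.map ι gphiP : Polynomial K_P) : PowerSeries K_P) * LPpsi
        = ((Polynomial.map ι gpsiP : Polynomial K_P) : PowerSeries K_P) * LPphi
          * (PowerSeries.C cK *
              ((Polynomial.map ι prodG : Polynomial K_P) : PowerSeries K_P))) :
    ∀ n : ℕ,
      (∃ h : PowerSeries K_P, Tate h ∧ LPpsi = (PowerSeries.X - 1) ^ n * h) ↔
      (∃ h : PowerSeries K_P, Tate h ∧ LPphi = (PowerSeries.X - 1) ^ n * h) := by
  classical
  -- basic valuation facts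
  have hv_top_ne : ∀ x : K_P, x ≠ 0 → v x ≠ ⊤ := fun x hx h => hx ((hv0 x).1 h)
  have hv1 : v 1 = 0 := by
    have h11 := hvmul 1 1
    rw [one_mul] at h11
    obtain ⟨a, ha⟩ := WithTop.ne_top_iff_exists.1 (hv_top_ne 1 one_ne_zero)
    rw [← ha] at h11
    have ha0 : a = a + a := by exact_mod_cast h11
    have ha0' : a = 0 := by omega
    rw [← ha, ha0']; rfl
  have hvm1 : v (-1 : K_P) = 0 := by
    have h11 := hvmul (-1 : K_P) (-1)
    rw [neg_mul_neg, one_mul, hv1] at h11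
    obtain ⟨a, ha⟩ := WithTop.ne_top_iff_exists.1 (hv_top_ne (-1) (by norm_num))
    rw [← ha] at h11
    have ha0 : (0 : ℤ) = a + a := by exact_mod_cast h11
    have ha0' : a = 0 := by omega
    rw [← ha, ha0']; rfl
  have hvneg : ∀ x : K_P, v (-x) = v x := by
    intro x
    rw [← neg_one_mul, hvmul, hvm1, zero_add]
  -- closure properties of the Tate condition
  have Tate_zero : Tate 0 := by
    rw [hTate]
    intro N
    exact ⟨0, fun m _ => by rw [map_zero, (hv0 0).2 rfl]; exact le_top⟩
  have Tate_add : ∀ f g, Tate f → Tate g → Tate (f + g) := by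
    intro f g hf hg
    rw [hTate] at hf hg ⊢
    intro N
    obtain ⟨M1, hM1⟩ := hf N
    obtain ⟨M2, hM2⟩ := hg N
    refine ⟨max M1 M2, fun m hm => ?_⟩
    have e1 := hM1 m (le_trans (le_max_left _ _) hm)
    have e2 := hM2 m (le_trans (le_max_right _ _) hm)
    rw [map_add]
    exact le_trans (le_min e1 e2) (hvadd _ _)
  have Tate_sub : ∀ f g, Tate f → Tate g → Tate (f - g) := by
    intro f g hf hg
    rw [hTate] at hf hg ⊢
    intro N
    obtain ⟨M1, hM1⟩ := hf N
    obtain ⟨M2, hM2⟩ := hg N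
    refine ⟨max M1 M2, fun m hm => ?_⟩
    have e1 := hM1 m (le_trans (le_max_left _ _) hm)
    have e2 := hM2 m (le_trans (le_max_right _ _) hm)
    rw [map_sub, sub_eq_add_neg]
    refine le_trans (le_min e1 ?_) (hvadd _ _)
    rw [hvneg]; exact e2
  have Tate_Cmul : ∀ (c : K_P) f, Tate f → Tate (PowerSeries.C c * f) := by
    intro c f hf
    rcases eq_or_ne c 0 with rfl | hc
    · rw [map_zero, zero_mul]; exact Tate_zero
    · obtain ⟨a, ha⟩ := WithTop.ne_top_iff_exists.1 (hv_top_ne c hc)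
      rw [hTate] at hf ⊢
      intro N
      obtain ⟨M, hM⟩ := hf (N - a)
      refine ⟨M, fun m hm => ?_⟩
      rw [PowerSeries.coeff_C_mul, hvmul, ← ha]
      have hNa : N = a + (N - a) := by ring
      calc (N : WithTop ℤ) = ((a + (N - a) : ℤ) : WithTop ℤ) := by rw [← hNa]
        _ = (a : WithTop ℤ) + ((N - a : ℤ) : WithTop ℤ) := by
            exact_mod_cast rfl
        _ ≤ (a : WithTop ℤ) + v (PowerSeries.coeff m f) :=
            add_le_add_right (hM m hm) _
  have Tate_Xmul : ∀ f, Tate f → Tate (PowerSeries.X * f) := by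
    intro f hf
    rw [hTate] at hf ⊢
    intro N
    obtain ⟨M, hM⟩ := hf N
    refine ⟨M + 1, fun m hm => ?_⟩
    obtain ⟨k, rfl⟩ := Nat.exists_eq_add_of_le hm
    have hnat : M + 1 + k = (M + k) + 1 := by ring
    rw [hnat, PowerSeries.coeff_succ_X_mul]
    exact hM _ (Nat.le_add_right _ _)
  have Tate_Xpow_mul : ∀ (k : ℕ) f, Tate f → Tate (PowerSeries.X ^ k * f) := by
    intro k
    induction k with
    | zero => intro f hf; rwa [pow_zero, one_mul]
    | succ k ih =>
        intro f hf
        rw [pow_succ, mul_comm (PowerSeries.X ^ k) PowerSeries.X, mul_assoc]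
        exact Tate_Xmul _ (ih f hf)
  have Tate_polymul : ∀ (p : Polynomial K_P) f, Tate f →
      Tate ((p : PowerSeries K_P) * f) := by
    intro p
    induction p using Polynomial.induction_on' with
    | add p q hp hq =>
        intro f hf
        rw [Polynomial.coe_add, add_mul]
        exact Tate_add _ _ (hp f hf) (hq f hf)
    | monomial k a =>
        intro f hf
        rw [← Polynomial.C_mul_X_pow_eq_monomial, Polynomial.coe_mul, Polynomial.coe_C,
          Polynomial.coe_pow, Polynomial.coe_X, mul_assoc]
        exact Tate_Cmul _ _ (Tate_Xpow_mul k f hf)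
  have Tate_X1 : ∀ f, Tate f → Tate ((PowerSeries.X - 1) * f) := by
    intro f hf
    rw [sub_mul, one_mul]
    exact Tate_sub _ _ (Tate_Xmul f hf) hf
  -- core cancellation lemma
  have F : ∀ (g : Polynomial K_P) q, g.eval 1 ≠ 0 →
      Tate ((PowerSeries.X - 1) * q) → Tate ((g : PowerSeries K_P) * q) → Tate q := by
    intro g q hg h1q h2q
    obtain ⟨w, hw⟩ := Polynomial.X_sub_C_dvd_sub_C_eval (a := (1 : K_P)) (p := g)
    have hdecomp : (g : PowerSeries K_P) = PowerSeries.C (g.eval 1)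
        + (PowerSeries.X - 1) * (w : PowerSeries K_P) := by
      have hpoly : g = Polynomial.C (g.eval 1) + (Polynomial.X - Polynomial.C 1) * w := by
        rw [← hw]; ring
      conv_lhs => rw [hpoly]
      rw [Polynomial.coe_add, Polynomial.coe_mul, Polynomial.coe_sub,
        Polynomial.coe_C, Polynomial.coe_X, Polynomial.coe_C, map_one]
    have hCq : Tate (PowerSeries.C (g.eval 1) * q) := by
      have hq : PowerSeries.C (g.eval 1) * q
          = (g : PowerSeries K_P) * q
            - (w : PowerSeries K_P) * ((PowerSeries.X - 1) * q) := by
        rw [hdecomp]; ring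
      rw [hq]
      exact Tate_sub _ _ h2q (Tate_polymul w _ h1q)
    have hqeq : q = PowerSeries.C (g.eval 1)⁻¹
        * (PowerSeries.C (g.eval 1) * q) := by
      rw [← mul_assoc, ← map_mul, inv_mul_cancel₀ hg, map_one, one_mul]
    rw [hqeq]
    exact Tate_Cmul _ _ hCq
  have E : ∀ (k : ℕ) (g : Polynomial K_P) q, g.eval 1 ≠ 0 →
      Tate ((PowerSeries.X - 1) ^ k * q) → Tate ((g : PowerSeries K_P) * q) → Tate q := by
    intro k
    induction k with
    | zero => intro g q _ hq _; rwa [pow_zero, one_mul] at hq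
    | succ k ih =>
        intro g q hg hq hgq
        have h1' : Tate ((PowerSeries.X - 1) ^ k * ((PowerSeries.X - 1) * q)) := by
          have e : (PowerSeries.X - 1) ^ (k + 1) * q
              = (PowerSeries.X - 1) ^ k * ((PowerSeries.X - 1) * q) := by
            rw [pow_succ, mul_assoc]
          rwa [e] at hq
        have h2' : Tate ((g : PowerSeries K_P) * ((PowerSeries.X - 1) * q)) := by
          have e : (g : PowerSeries K_P) * ((PowerSeries.X - 1) * q)
              = (PowerSeries.X - 1) * ((g : PowerSeries K_P) * q) := by ring
          rw [e]; exact Tate_X1 _ hgq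
        exact F g q hg (ih g _ hg h1' h2') hgq
  -- evaluation at 1 of mapped polynomials
  have hev : ∀ p : Polynomial (Polynomial Fq), p.eval 1 ≠ 0 → (p.map ι).eval 1 ≠ 0 := by
    intro p hp
    rw [Polynomial.eval_map, Polynomial.eval₂_at_one]
    intro h
    exact hp (hinj (h.trans (map_zero ι).symm))
  have hevφ := hev gphiP h1
  have hevψ := hev gpsiP h2
  have hevPr := hev prodG h3
  -- the inverse of X - 1 in the power series ring
  have hcc : PowerSeries.constantCoeff (PowerSeries.X - 1) = ((-1 : K_Pˣ) : K_P) := by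
    simp
  set i := PowerSeries.invOfUnit (PowerSeries.X - 1 : PowerSeries K_P) (-1) with hi_def
  have hi : (PowerSeries.X - 1 : PowerSeries K_P) * i = 1 :=
    PowerSeries.mul_invOfUnit _ _ hcc
  have hkey : ∀ n : ℕ, (PowerSeries.X - 1 : PowerSeries K_P) ^ n * i ^ n = 1 := by
    intro n; rw [← mul_pow, hi, one_pow]
  intro n
  have hck1 : PowerSeries.C cK⁻¹ * PowerSeries.C cK = 1 := by
    rw [← map_mul, inv_mul_cancel₀ hcK, map_one]
  constructor
  · rintro ⟨h, hTh, hpsi⟩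
    refine ⟨i ^ n * LPphi, ?_, by rw [← mul_assoc, hkey n, one_mul]⟩
    apply E n (gpsiP.map ι * prodG.map ι) (i ^ n * LPphi)
    · rw [Polynomial.eval_mul]; exact mul_ne_zero hevψ hevPr
    · have e : (PowerSeries.X - 1) ^ n * (i ^ n * LPphi) = LPphi := by
        rw [← mul_assoc, hkey n, one_mul]
      rw [e]; exact hT1
    · have heq : ((gpsiP.map ι * prodG.map ι : Polynomial K_P) : PowerSeries K_P)
          * (i ^ n * LPphi)
          = PowerSeries.C cK⁻¹
            * (((gphiP.map ι : Polynomial K_P) : PowerSeries K_P) * h) := by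
        rw [hpsi] at hrel
        rw [Polynomial.coe_mul]
        linear_combination (-(i ^ n * PowerSeries.C cK⁻¹)) * hrel
          + (PowerSeries.C cK⁻¹
              * ((gphiP.map ι : Polynomial K_P) : PowerSeries K_P) * h) * hkey n
          + (-(((gpsiP.map ι : Polynomial K_P) : PowerSeries K_P)
              * ((prodG.map ι : Polynomial K_P) : PowerSeries K_P) * i ^ n * LPphi)) * hck1
      rw [heq]
      exact Tate_Cmul _ _ (Tate_polymul _ _ hTh)
  · rintro ⟨h, hTh, hphi⟩
    refine ⟨i ^ n * LPpsi, ?_, by rw [← mul_assoc, hkey n, one_mul]⟩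
    apply E n (gphiP.map ι) (i ^ n * LPpsi)
    · exact hevφ
    · have e : (PowerSeries.X - 1) ^ n * (i ^ n * LPpsi) = LPpsi := by
        rw [← mul_assoc, hkey n, one_mul]
      rw [e]; exact hT2
    · have heq : ((gphiP.map ι : Polynomial K_P) : PowerSeries K_P) * (i ^ n * LPpsi)
          = ((gpsiP.map ι : Polynomial K_P) : PowerSeries K_P)
            * (PowerSeries.C cK
              * (((prodG.map ι : Polynomial K_P) : PowerSeries K_P) * h)) := by
        rw [hphi] at hrel
        linear_combination (i ^ n) * hrel
          + (((gpsiP.map ι : Polynomial K_P) : PowerSeries K_P) * PowerSeries.C cK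
              * ((prodG.map ι : Polynomial K_P) : PowerSeries K_P) * h) * hkey n
      rw [heq]
      exact Tate_polymul _ _ (Tate_Cmul _ _ (Tate_polymul _ _ hTh))
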